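/- Let I be a subset of {(i,j) : 1 ≤ i < j ≤ n} and Δ_I = Π_{(i,j)∈I}(x_i − x_j). For any homogeneous polynomial f of degree k in Q[x_1,...,x_n], the rational function Σ_{w∈S_n} w·(f/Δ_I) is a symmetric polynomial; it is zero if k < |I| and is homogeneous of degree k − |I| otherwise. -/

import Mathlib

open MvPolynomial Finset Equiv
variable {n : ℕ}

lemma prod_pairs (g : Fin n → Fin n → MvPolynomial (Fin n) ℚ) :
    ∏ p ∈ Finset.univ.filter (fun p : Fin n × Fin n => p.1 < p.2), g p.1 p.2
      = ∏ i : Fin n, ∏ j ∈ Finset.Ioi i, g i j := by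
  rw [Finset.prod_filter, ← Finset.univ_product_univ, Finset.prod_product]
  refine Finset.prod_congr rfl fun i _ => ?_
  rw [show Finset.Ioi i = Finset.univ.filter (fun j => i < j) by ext; simp,
    Finset.prod_filter]

lemma rename_vdet (σ : Equiv.Perm (Fin n)) :
    rename σ ((Matrix.vandermonde fun i => (X i : MvPolynomial (Fin n) ℚ)).det)
      = ((Equiv.Perm.sign σ : ℤ) : MvPolynomial (Fin n) ℚ)
        * (Matrix.vandermonde fun i => (X i : MvPolynomial (Fin n) ℚ)).det := by
  have h0 := RingHom.map_det ((rename (σ : Fin n → Fin n) : MvPolynomial (Fin n) ℚ →ₐ[ℚ] MvPolynomial (Fin n) ℚ) : MvPolynomial (Fin n) ℚ →+* MvPolynomial (Fin n) ℚ) (Matrix.vandermonde fun i => (X i : MvPolynomial (Fin n) ℚ))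
  have h1 : (Matrix.vandermonde fun i => (X i : MvPolynomial (Fin n) ℚ)).map
      (rename (σ : Fin n → Fin n) : MvPolynomial (Fin n) ℚ →ₐ[ℚ] MvPolynomial (Fin n) ℚ)
      = (Matrix.vandermonde fun i => (X i : MvPolynomial (Fin n) ℚ)).submatrix σ id := by
    ext i j
    simp [Matrix.vandermonde]
  simp only [RingHom.coe_coe] at h0
  rw [h0, RingHom.mapMatrix_apply, RingHom.coe_coe, h1, Matrix.det_permute]
variable {n : ℕ}

lemma sub_dvd_sub_aeval (i j : Fin n) (P : MvPolynomial (Fin n) ℚ) :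
    (X i - X j : MvPolynomial (Fin n) ℚ) ∣
      P - aeval (fun m => if m = i then X j else X m) P := by
  set g : Fin n → MvPolynomial (Fin n) ℚ := fun m => if m = i then X j else X m with hg
  induction P using MvPolynomial.induction_on with
  | C a => simp
  | add p q hp hq =>
      have : p + q - aeval g (p + q) = (p - aeval g p) + (q - aeval g q) := by
        rw [map_add]; ring
      rw [this]; exact dvd_add hp hq
  | mul_X p l hp =>
      have : p * X l - aeval g (p * X l)
          = (p - aeval g p) * X l + aeval g p * (X l - aeval g (X l : MvPolynomial (Fin n) ℚ)) := by
        rw [map_mul]; ring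
      rw [this]
      refine dvd_add (Dvd.dvd.mul_right hp _) (Dvd.dvd.mul_left ?_ _)
      rw [aeval_X]
      by_cases h : l = i
      · subst h; simp [hg]
      · simp [hg, h]

lemma dvd_of_antisym {i j : Fin n} (hij : i ≠ j) {P : MvPolynomial (Fin n) ℚ}
    (h : rename (Equiv.swap i j) P = -P) :
    (X i - X j : MvPolynomial (Fin n) ℚ) ∣ P := by
  set g : Fin n → MvPolynomial (Fin n) ℚ := fun m => if m = i then X j else X m with hg
  have hgt : (g ∘ (Equiv.swap i j)) = g := by
    funext l
    by_cases h1 : l = i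
    · subst h1; simp [hg, Equiv.swap_apply_left, hij.symm]
    · by_cases h2 : l = j
      · subst h2; simp [hg, Equiv.swap_apply_right, hij.symm]
      · simp [hg, Equiv.swap_apply_of_ne_of_ne h1 h2, h1]
  have h1 : aeval g P = aeval g (rename (Equiv.swap i j) P) := by
    rw [aeval_rename, hgt]
  rw [h, map_neg] at h1
  have h2 : aeval g P = 0 := by
    have h4 : (2 : MvPolynomial (Fin n) ℚ) * aeval g P = 0 := by
      rw [two_mul]
      rw [eq_neg_iff_add_eq_zero] at h1
      exact h1
    rcases mul_eq_zero.mp h4 with h5 | h5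
    · exact absurd h5 two_ne_zero
    · exact h5
  have h3 := sub_dvd_sub_aeval i j P
  rw [show (fun m => if m = i then X j else X m) = g from rfl, h2, sub_zero] at h3
  exact h3
variable {n : ℕ}

lemma prime_X_sub_X {i j : Fin n} (hij : j ≠ i) :
    Prime (X i - X j : MvPolynomial (Fin n) ℚ) := by
  let e : Fin n ≃ Option {b : Fin n // b ≠ i} := (Equiv.optionSubtypeNe i).symm
  let Φ := (renameEquiv ℚ e).trans (optionEquivLeft ℚ {b : Fin n // b ≠ i})
  rw [← MulEquiv.prime_iff Φ.toMulEquiv]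
  have h1 : Φ (X i - X j) = Polynomial.X - Polynomial.C (X ⟨j, hij⟩) := by
    have hi : e i = none := Equiv.optionSubtypeNe_symm_self i
    have hj : e j = some ⟨j, hij⟩ := Equiv.optionSubtypeNe_symm_of_ne hij
    simp only [Φ, AlgEquiv.trans_apply, map_sub, renameEquiv_apply, rename_X, hi, hj,
      optionEquivLeft_X_none, optionEquivLeft_X_some]
  rw [show Φ.toMulEquiv (X i - X j : MvPolynomial (Fin n) ℚ) = Φ (X i - X j) from rfl, h1]
  exact Polynomial.prime_X_sub_C _

lemma not_dvd_pairs {p q : Fin n × Fin n} (hp : p.1 < p.2) (hq : q.1 < q.2) (hpq : p ≠ q) :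
    ¬ ((X p.2 - X p.1 : MvPolynomial (Fin n) ℚ) ∣ (X q.2 - X q.1)) := by
  rintro ⟨c, hc⟩
  set g : Fin n → MvPolynomial (Fin n) ℚ := fun m => if m = p.1 then X p.2 else X m with hg
  have h0 : aeval g (X q.2 - X q.1 : MvPolynomial (Fin n) ℚ) = 0 := by
    rw [hc, map_mul, map_sub, aeval_X, aeval_X]
    simp [hg]
  rw [map_sub, aeval_X, aeval_X] at h0
  have hXne : ∀ {a b : Fin n}, a ≠ b → (X a : MvPolynomial (Fin n) ℚ) ≠ X b :=
    fun h => fun hX => h (X_injective hX)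
  have h1 : g q.2 - g q.1 ≠ 0 := by
    simp only [hg]
    by_cases h2 : q.2 = p.1
    · have h3 : q.1 ≠ p.1 := fun h => absurd (h ▸ h2 ▸ hq) (lt_irrefl _)
      rw [if_pos h2, if_neg h3]
      have h4 : q.1 < p.2 := lt_trans (h2 ▸ hq) hp
      exact sub_ne_zero.mpr (hXne h4.ne')
    · by_cases h3 : q.1 = p.1
      · rw [if_neg h2, if_pos h3]
        exact sub_ne_zero.mpr (hXne (show q.2 ≠ p.2 from
          fun h4 => hpq (Prod.ext h3 h4).symm))
      · rw [if_neg h2, if_neg h3]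
        exact sub_ne_zero.mpr (hXne hq.ne')
  exact h1 h0

lemma prod_primes_dvd_aux (s : Finset (Fin n × Fin n))
    (q : Fin n × Fin n → MvPolynomial (Fin n) ℚ)
    (hprime : ∀ b ∈ s, Prime (q b))
    (hnd : ∀ a ∈ s, ∀ b ∈ s, a ≠ b → ¬ q a ∣ q b) (P : MvPolynomial (Fin n) ℚ)
    (hd : ∀ b ∈ s, q b ∣ P) : (∏ b ∈ s, q b) ∣ P := by
  induction s using Finset.induction_on generalizing P with
  | empty => simp
  | @insert a s ha ih =>
      obtain ⟨m, hm⟩ := hd a (mem_insert_self a s)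
      rw [Finset.prod_insert ha, hm]
      refine mul_dvd_mul_left _ (ih (fun b hb => hprime b (mem_insert_of_mem hb))
        (fun x hx y hy hxy => hnd x (mem_insert_of_mem hx) y (mem_insert_of_mem hy) hxy) m
        fun b hb => ?_)
      have hba : b ≠ a := fun h => ha (h ▸ hb)
      have h1 : q b ∣ q a * m := hm ▸ hd b (mem_insert_of_mem hb)
      rcases (hprime b (mem_insert_of_mem hb)).2.2 _ _ h1 with h2 | h2
      · exact absurd h2 (hnd b (mem_insert_of_mem hb) a (mem_insert_self a s) hba)
      · exact h2
variable {n : ℕ}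

lemma hom_div {D P g : MvPolynomial (Fin n) ℚ} {a b : ℕ} (hD : D.IsHomogeneous a)
    (hDne : D ≠ 0) (hP : P.IsHomogeneous b) (hPg : P = D * g) :
    (b < a → g = 0) ∧ (a ≤ b → g.IsHomogeneous (b - a)) := by
  have hcomp : ∀ d : ℕ, a + d ≠ b → homogeneousComponent d g = 0 := by
    intro d hd
    by_cases hdr : d ∈ Finset.range (g.totalDegree + 1)
    case neg =>
      refine homogeneousComponent_eq_zero _ _ ?_
      simpa [Finset.mem_range, Nat.lt_succ_iff, not_le] using hdr
    case pos =>
      have hsum : P = ∑ e ∈ Finset.range (g.totalDegree + 1), D * homogeneousComponent e g := by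
        rw [hPg, ← Finset.mul_sum, sum_homogeneousComponent]
      have h1 := congrArg (homogeneousComponent (a + d)) hsum
      rw [map_sum] at h1
      have h2 : homogeneousComponent (a + d) P = 0 := by
        rw [homogeneousComponent_of_mem ((mem_homogeneousSubmodule _ _).mpr hP),
          if_neg hd]
      have h3 : ∀ e ∈ Finset.range (g.totalDegree + 1),
          homogeneousComponent (a + d) (D * homogeneousComponent e g)
            = if e = d then D * homogeneousComponent e g else 0 := by
        intro e _
        rw [homogeneousComponent_of_mem ((mem_homogeneousSubmodule _ _).mpr
          (hD.mul (homogeneousComponent_isHomogeneous e g)))]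
        by_cases hed : e = d
        · subst hed; simp
        · rw [if_neg (by omega), if_neg hed]
      rw [Finset.sum_congr rfl h3, Finset.sum_ite_eq' _ d
        (fun e => D * homogeneousComponent e g), if_pos hdr] at h1
      rcases mul_eq_zero.mp (h2 ▸ h1.symm) with h4 | h4
      · exact absurd h4 hDne
      · exact h4
  constructor
  · intro hba
    have : g = ∑ e ∈ Finset.range (g.totalDegree + 1), homogeneousComponent e g :=
      (sum_homogeneousComponent g).symm
    rw [this]
    refine Finset.sum_eq_zero fun e _ => hcomp e ?_
    omega
  · intro hab
    have hg : g = homogeneousComponent (b - a) g := by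
      conv_lhs => rw [← sum_homogeneousComponent g]
      refine Finset.sum_eq_single (b - a) (fun e _ he => hcomp e (by omega)) ?_
      intro hnr
      refine homogeneousComponent_eq_zero _ _ ?_
      simp only [Finset.mem_range, Nat.lt_succ_iff, not_le] at hnr
      omega
    rw [hg]
    exact homogeneousComponent_isHomogeneous _ g

/-- For a set `I` of pairs `(i,j)` with `i < j`, the symmetrization
`Σ_{w ∈ S_n} w·(f/Δ_I)` where `Δ_I = ∏_{(i,j)∈I}(x_i - x_j)` is a symmetric polynomial;
it is zero if `deg f < |I|` and homogeneous of degree `deg f - |I|` otherwise. -/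
theorem stmt2 (n k : ℕ) (I : Finset (Fin n × Fin n)) (hI : ∀ p ∈ I, p.1 < p.2)
    (f : MvPolynomial (Fin n) ℚ) (hf : f.IsHomogeneous k) :
    ∃ g : MvPolynomial (Fin n) ℚ, g.IsSymmetric ∧
      (∑ w : Equiv.Perm (Fin n),
          algebraMap (MvPolynomial (Fin n) ℚ) (FractionRing (MvPolynomial (Fin n) ℚ))
            (rename w f) /
            algebraMap (MvPolynomial (Fin n) ℚ) (FractionRing (MvPolynomial (Fin n) ℚ))
            (rename w (∏ p ∈ I, (X p.1 - X p.2)))) =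
        algebraMap (MvPolynomial (Fin n) ℚ) (FractionRing (MvPolynomial (Fin n) ℚ)) g ∧
      (k < I.card → g = 0) ∧ (I.card ≤ k → g.IsHomogeneous (k - I.card)) := by
  classical
  have injA : Function.Injective
      (algebraMap (MvPolynomial (Fin n) ℚ) (FractionRing (MvPolynomial (Fin n) ℚ))) :=
    IsFractionRing.injective _ _
  have hA0 : ∀ x : MvPolynomial (Fin n) ℚ, x ≠ 0 →
      algebraMap (MvPolynomial (Fin n) ℚ) (FractionRing (MvPolynomial (Fin n) ℚ)) x ≠ 0 :=
    fun x hx h0 => hx (injA (by rw [h0, map_zero]))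
  set J : Finset (Fin n × Fin n) := Finset.univ.filter (fun p => p.1 < p.2) with hJ
  have hIJ : I ⊆ J := fun p hp => Finset.mem_filter.mpr ⟨Finset.mem_univ _, hI p hp⟩
  have hJlt : ∀ p ∈ J, p.1 < p.2 := fun p hp => (Finset.mem_filter.mp hp).2
  set D : MvPolynomial (Fin n) ℚ := ∏ p ∈ J, (X p.2 - X p.1) with hD
  -- D is the Vandermonde determinant
  have hDdet : D = (Matrix.vandermonde fun i => (X i : MvPolynomial (Fin n) ℚ)).det := by
    rw [hD, Matrix.det_vandermonde]
    exact prod_pairs (fun i j => X j - X i)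
  have hsignD : ∀ σ : Equiv.Perm (Fin n),
      rename ⇑σ D = ((Equiv.Perm.sign σ : ℤ) : MvPolynomial (Fin n) ℚ) * D := by
    intro σ; rw [hDdet]; exact rename_vdet σ
  -- nonvanishing
  have hWne : ∀ S : Finset (Fin n × Fin n), (∀ p ∈ S, p.1 ≠ p.2) →
      (∏ p ∈ S, (X p.2 - X p.1 : MvPolynomial (Fin n) ℚ)) ≠ 0 := by
    intro S hS
    rw [Finset.prod_ne_zero_iff]
    intro p hp
    exact sub_ne_zero.mpr fun h => (hS p hp) (X_injective h).symm
  have hDne : D ≠ 0 := hWne J fun p hp => (hJlt p hp).ne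
  -- homogeneity of the products
  have hWhom : ∀ S : Finset (Fin n × Fin n),
      (∏ p ∈ S, (X p.2 - X p.1 : MvPolynomial (Fin n) ℚ)).IsHomogeneous S.card := by
    intro S
    have := MvPolynomial.IsHomogeneous.prod S
      (fun p => (X p.2 - X p.1 : MvPolynomial (Fin n) ℚ)) (fun _ => 1)
      (fun p _ => (isHomogeneous_X _ _).sub (isHomogeneous_X _ _))
    simpa using this
  have hDhom : D.IsHomogeneous J.card := hWhom J
  -- the ΔI product
  set ΔI : MvPolynomial (Fin n) ℚ := ∏ p ∈ I, (X p.1 - X p.2) with hΔI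
  have hΔIW : ΔI = (-1 : MvPolynomial (Fin n) ℚ) ^ I.card * ∏ p ∈ I, (X p.2 - X p.1) := by
    rw [hΔI, ← Finset.prod_const, ← Finset.prod_mul_distrib]
    exact Finset.prod_congr rfl fun p _ => by ring
  have hΔIne : ΔI ≠ 0 := by
    rw [hΔIW]
    exact mul_ne_zero (pow_ne_zero _ (neg_ne_zero.mpr one_ne_zero))
      (hWne I fun p hp => (hI p hp).ne)
  have hcard : (J \ I).card + I.card = J.card := Finset.card_sdiff_add_card_eq_card hIJ
  set h : MvPolynomial (Fin n) ℚ := f * ∏ p ∈ J \ I, (X p.2 - X p.1) with hh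
  have hhhom : h.IsHomogeneous (k + (J \ I).card) := hf.mul (hWhom _)
  set P : MvPolynomial (Fin n) ℚ := ∑ w : Equiv.Perm (Fin n),
      (((-1) ^ I.card * (Equiv.Perm.sign w : ℤ) : ℤ) : MvPolynomial (Fin n) ℚ)
        * rename ⇑w h with hP
  have sq1 : ∀ w : Equiv.Perm (Fin n),
      ((Equiv.Perm.sign w : ℤ)) * (Equiv.Perm.sign w : ℤ) = 1 := by
    intro w
    rcases Int.units_eq_one_or (Equiv.Perm.sign w) with hu | hu <;> rw [hu] <;> norm_num
  -- homogeneity of P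
  have hPhom : P.IsHomogeneous (k + (J \ I).card) := by
    refine MvPolynomial.IsHomogeneous.sum _ _ _ fun w _ => ?_
    rw [show ((((-1) ^ I.card * (Equiv.Perm.sign w : ℤ) : ℤ)) : MvPolynomial (Fin n) ℚ)
      = C ((((-1) ^ I.card * (Equiv.Perm.sign w : ℤ) : ℤ)) : ℚ) from
        (map_intCast (C : ℚ →+* MvPolynomial (Fin n) ℚ) _).symm]
    exact (hhhom.rename_isHomogeneous).C_mul _
  -- antisymmetry of P
  have hPanti : ∀ σ : Equiv.Perm (Fin n),
      rename ⇑σ P = ((Equiv.Perm.sign σ : ℤ) : MvPolynomial (Fin n) ℚ) * P := by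
    intro σ
    rw [hP, map_sum, Finset.mul_sum]
    refine Fintype.sum_equiv (Equiv.mulLeft σ) _ _ fun w => ?_
    rw [map_mul, map_intCast, rename_rename]
    rw [show (Equiv.mulLeft σ) w = σ * w from rfl,
      show ⇑σ ∘ ⇑w = ⇑(σ * w) from rfl]
    have hz : ((-1) ^ I.card * (Equiv.Perm.sign w : ℤ) : ℤ)
        = (Equiv.Perm.sign σ : ℤ) * ((-1) ^ I.card * (Equiv.Perm.sign (σ * w) : ℤ)) := by
      rw [Equiv.Perm.sign_mul, Units.val_mul]
      linear_combination (-((-1 : ℤ) ^ I.card * (Equiv.Perm.sign w : ℤ))) * sq1 σ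
    rw [← mul_assoc, ← Int.cast_mul, ← hz]
  -- divisibility of P by D
  have hdvd : D ∣ P := by
    rw [hD]
    refine prod_primes_dvd_aux J _ (fun p hp => prime_X_sub_X (hJlt p hp).ne) ?_ P ?_
    · intro p hp q hq hpq
      exact not_dvd_pairs (hJlt p hp) (hJlt q hq) hpq
    · intro p hp
      refine dvd_of_antisym (hJlt p hp).ne' ?_
      rw [hPanti (Equiv.swap p.2 p.1), Equiv.Perm.sign_swap (hJlt p hp).ne']
      push_cast
      ring
  obtain ⟨g, hg⟩ := hdvd
  refine ⟨g, ?_, ?_, ?_, ?_⟩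
  -- symmetry
  · intro σ
    have hsne : ((Equiv.Perm.sign σ : ℤ) : MvPolynomial (Fin n) ℚ) ≠ 0 :=
      Int.cast_ne_zero.mpr (Units.ne_zero _)
    have e1 : ((Equiv.Perm.sign σ : ℤ) : MvPolynomial (Fin n) ℚ) * (D * rename ⇑σ g)
        = ((Equiv.Perm.sign σ : ℤ) : MvPolynomial (Fin n) ℚ) * (D * g) := by
      have e2 : rename ⇑σ P
          = ((Equiv.Perm.sign σ : ℤ) : MvPolynomial (Fin n) ℚ) * (D * g) := by
        rw [hPanti σ, hg]
      rw [← e2, hg, map_mul, hsignD σ]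
      ring
    exact mul_left_cancel₀ hDne (mul_left_cancel₀ hsne e1)
  -- the sum identity
  · have hterm : ∀ w : Equiv.Perm (Fin n),
        algebraMap (MvPolynomial (Fin n) ℚ) (FractionRing (MvPolynomial (Fin n) ℚ))
            (rename ⇑w f)
          / algebraMap (MvPolynomial (Fin n) ℚ) (FractionRing (MvPolynomial (Fin n) ℚ))
            (rename ⇑w ΔI)
        = algebraMap (MvPolynomial (Fin n) ℚ) (FractionRing (MvPolynomial (Fin n) ℚ))
            ((((-1) ^ I.card * (Equiv.Perm.sign w : ℤ) : ℤ) : MvPolynomial (Fin n) ℚ)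
              * rename ⇑w h)
          / algebraMap (MvPolynomial (Fin n) ℚ) (FractionRing (MvPolynomial (Fin n) ℚ))
            D := by
      intro w
      have hΔwne : rename (⇑w) ΔI ≠ 0 := fun h0 =>
        hΔIne ((rename_injective _ w.injective) (by rwa [map_zero]))
      rw [div_eq_div_iff (hA0 _ hΔwne) (hA0 _ hDne), ← map_mul, ← map_mul]
      congr 1
      -- polynomial identity
      have hWD : (∏ p ∈ J \ I, (X p.2 - X p.1 : MvPolynomial (Fin n) ℚ)) * ΔI
          = (-1 : MvPolynomial (Fin n) ℚ) ^ I.card * D := by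
        calc (∏ p ∈ J \ I, (X p.2 - X p.1 : MvPolynomial (Fin n) ℚ)) * ΔI
            = (-1 : MvPolynomial (Fin n) ℚ) ^ I.card
              * ((∏ p ∈ J \ I, (X p.2 - X p.1 : MvPolynomial (Fin n) ℚ))
                * ∏ p ∈ I, (X p.2 - X p.1)) := by rw [hΔIW]; ring
          _ = (-1 : MvPolynomial (Fin n) ℚ) ^ I.card * D := by
              rw [hD, Finset.prod_sdiff hIJ]
      have h2' : ((-1 : MvPolynomial (Fin n) ℚ) ^ I.card) * ((-1) ^ I.card) = 1 := by
        rw [← pow_add]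
        exact Even.neg_one_pow ⟨I.card, rfl⟩
      have h1' : ((Equiv.Perm.sign w : ℤ) : MvPolynomial (Fin n) ℚ)
          * ((Equiv.Perm.sign w : ℤ) : MvPolynomial (Fin n) ℚ) = 1 := by
        rw [← Int.cast_mul, sq1 w, Int.cast_one]
      have hone : ((((-1) ^ I.card * (Equiv.Perm.sign w : ℤ) : ℤ)) : MvPolynomial (Fin n) ℚ)
          * ((-1 : MvPolynomial (Fin n) ℚ) ^ I.card
            * ((Equiv.Perm.sign w : ℤ) : MvPolynomial (Fin n) ℚ)) = 1 := by
        push_cast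
        linear_combination (((Equiv.Perm.sign w : ℤ) : MvPolynomial (Fin n) ℚ)
          * ((Equiv.Perm.sign w : ℤ) : MvPolynomial (Fin n) ℚ)) * h2' + h1'
      calc rename (⇑w) f * D
          = ((((-1) ^ I.card * (Equiv.Perm.sign w : ℤ) : ℤ)) : MvPolynomial (Fin n) ℚ)
            * ((-1 : MvPolynomial (Fin n) ℚ) ^ I.card
              * ((Equiv.Perm.sign w : ℤ) : MvPolynomial (Fin n) ℚ))
            * (rename (⇑w) f * D) := by rw [hone, one_mul]
        _ = ((((-1) ^ I.card * (Equiv.Perm.sign w : ℤ) : ℤ)) : MvPolynomial (Fin n) ℚ)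
            * rename (⇑w) f
            * ((-1 : MvPolynomial (Fin n) ℚ) ^ I.card
              * (((Equiv.Perm.sign w : ℤ) : MvPolynomial (Fin n) ℚ) * D)) := by ring
        _ = ((((-1) ^ I.card * (Equiv.Perm.sign w : ℤ) : ℤ)) : MvPolynomial (Fin n) ℚ)
            * rename (⇑w) f
            * ((-1 : MvPolynomial (Fin n) ℚ) ^ I.card * rename (⇑w) D) := by
              rw [hsignD w]
        _ = ((((-1) ^ I.card * (Equiv.Perm.sign w : ℤ) : ℤ)) : MvPolynomial (Fin n) ℚ)
            * rename (⇑w) f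
            * rename (⇑w) ((-1 : MvPolynomial (Fin n) ℚ) ^ I.card * D) := by
              rw [map_mul, map_pow, map_neg, map_one]
        _ = ((((-1) ^ I.card * (Equiv.Perm.sign w : ℤ) : ℤ)) : MvPolynomial (Fin n) ℚ)
            * rename (⇑w) f
            * rename (⇑w) ((∏ p ∈ J \ I, (X p.2 - X p.1 : MvPolynomial (Fin n) ℚ)) * ΔI)
            := by rw [hWD]
        _ = ((((-1) ^ I.card * (Equiv.Perm.sign w : ℤ) : ℤ)) : MvPolynomial (Fin n) ℚ)
            * rename (⇑w) h * rename (⇑w) ΔI := by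
              rw [hh, map_mul, map_mul]; ring
    calc ∑ w : Equiv.Perm (Fin n),
          algebraMap (MvPolynomial (Fin n) ℚ) (FractionRing (MvPolynomial (Fin n) ℚ))
            (rename ⇑w f)
          / algebraMap (MvPolynomial (Fin n) ℚ) (FractionRing (MvPolynomial (Fin n) ℚ))
            (rename ⇑w ΔI)
        = ∑ w : Equiv.Perm (Fin n),
          algebraMap (MvPolynomial (Fin n) ℚ) (FractionRing (MvPolynomial (Fin n) ℚ))
            ((((-1) ^ I.card * (Equiv.Perm.sign w : ℤ) : ℤ) : MvPolynomial (Fin n) ℚ)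
              * rename ⇑w h)
          / algebraMap (MvPolynomial (Fin n) ℚ) (FractionRing (MvPolynomial (Fin n) ℚ))
            D := Finset.sum_congr rfl fun w _ => hterm w
      _ = algebraMap (MvPolynomial (Fin n) ℚ) (FractionRing (MvPolynomial (Fin n) ℚ)) P
          / algebraMap (MvPolynomial (Fin n) ℚ) (FractionRing (MvPolynomial (Fin n) ℚ))
            D := by rw [hP, map_sum, Finset.sum_div]
      _ = algebraMap (MvPolynomial (Fin n) ℚ) (FractionRing (MvPolynomial (Fin n) ℚ)) g
          := by
            rw [hg, map_mul, mul_comm, mul_div_assoc, div_self (hA0 _ hDne), mul_one]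
  -- zero case
  · intro hk
    exact (hom_div hDhom hDne hPhom hg).1 (by omega)
  -- homogeneous case
  · intro hk
    have := (hom_div hDhom hDne hPhom hg).2 (by omega)
    rwa [show k + (J \ I).card - J.card = k - I.card by omega] at this
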